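/- Let k ≥ 3, r ≥ 1, and α be integers with 0 ≤ α ≤ rk − 1, and let m ∈ [1, k] be the integer with (m−1)r ≤ α < mr. Let A be a set of k distinct integers with 0 ∉ A, and let 𝒜 be the multiset consisting of each element of A with multiplicity exactly r. Then |Σ_α(𝒜)| ≥ r(⌊(k+1)²/4⌋ − m(m+1)/2) + 1; equivalently, |Σ_α(𝒜)| ≥ r((k+1)²/4 − m(m+1)/2) + 1 if k is odd and |Σ_α(𝒜)| ≥ r(((k+1)²−1)/4 − m(m+1)/2) + 1 if k is even. -/

import Mathlib

/-- `sigmaSeqAtLeast A r α` is the set of all subsequence sums of the multiset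
consisting of each element of `A` with multiplicity `r`, coming from
submultisets with at least `α` terms. -/
def sigmaSeqAtLeast (A : Finset ℤ) (r α : ℕ) : Finset ℤ :=
  (((r • A.val).powerset.filter (fun B => α ≤ Multiset.card B)).map
    Multiset.sum).toFinset


def tri : ℕ → ℕ
  | 0 => 0
  | (d+1) => tri d + (d+1)

lemma two_mul_tri (d : ℕ) : 2 * tri d = d * (d+1) := by
  induction d with
  | zero => rfl
  | succ n ih => simp [tri]; ring_nf; ring_nf at ih; omega

def fchain (r : ℕ) : ℕ → ℕ → ℕ
  | 0, _ => 0
  | (p+1), γ => min γ r * (p+1) + fchain r p (γ - min γ r)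

lemma fchain_zero (r : ℕ) : ∀ p, fchain r p 0 = 0 := by
  intro p; induction p with
  | zero => rfl
  | succ n ih => simp [fchain, ih]

lemma fchain_ge (r : ℕ) : ∀ p d γ, d ≤ p → r * d ≤ γ → r * tri d ≤ fchain r p γ := by
  intro p
  induction p with
  | zero => intro d γ hd _; interval_cases d; simp [tri]
  | succ n ih =>
    intro d γ hd hγ
    match d with
    | 0 => simp [tri]
    | (e+1) =>
      have hre : r ≤ γ := le_trans (by nlinarith) hγ
      have hmin : min γ r = r := min_eq_right hre
      have h1 : r * e ≤ γ - r := by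
        have : r * (e+1) = r * e + r := by ring
        omega
      have := ih e (γ - r) (by omega) h1
      have hexp : fchain r (n+1) γ = r * (n+1) + fchain r n (γ - r) := by
        simp [fchain, hmin]
      rw [hexp]
      have : r * tri (e+1) = r * tri e + r * (e+1) := by simp [tri]; ring
      have hne : r * (e+1) ≤ r * (n+1) := by
        apply Nat.mul_le_mul_left; omega
      omega

lemma key_div (a b k : ℕ) (hab : a + b = k) :
    ((k : ℤ) + 1)^2 / 4 ≤ ((tri a : ℤ) + (tri b : ℤ)) := by
  have ha := two_mul_tri a
  have hb := two_mul_tri b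
  have h4 : ((k : ℤ)+1)^2 ≤ 4 * ((tri a : ℤ) + (tri b : ℤ)) + 1 := by
    have hk : (k : ℤ) = (a : ℤ) + (b : ℤ) := by exact_mod_cast (by omega : k = a + b)
    have ha' : 2 * (tri a : ℤ) = (a : ℤ) * ((a : ℤ)+1) := by exact_mod_cast ha
    have hb' : 2 * (tri b : ℤ) = (b : ℤ) * ((b : ℤ)+1) := by exact_mod_cast hb
    nlinarith [sq_nonneg ((a : ℤ) - (b : ℤ))]
  have h0 : (0 : ℤ) ≤ ((k : ℤ)+1)^2 := sq_nonneg _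
  omega

lemma tri_eq_div (m : ℕ) : (m : ℤ) * ((m : ℤ) + 1) / 2 = (tri m : ℤ) := by
  have h := two_mul_tri m
  have h' : (m : ℤ) * ((m : ℤ)+1) = 2 * (tri m : ℤ) := by exact_mod_cast h.symm
  omega


lemma nsmul_mono_ms {s t : Multiset ℤ} (h : s ≤ t) (r : ℕ) : r • s ≤ r • t := by
  rw [Multiset.le_iff_count]; intro a
  simp only [Multiset.count_nsmul]
  exact Nat.mul_le_mul_left r (Multiset.le_iff_count.mp h a)

lemma pair_le (s : Finset ℤ) {x y : ℤ} (hx : x ∈ s) (hy : y ∈ s) (hxy : x ≠ y)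
    (r c d : ℕ) (hc : c ≤ r) (hd : d ≤ r) :
    Multiset.replicate c x + Multiset.replicate d y ≤ r • s.val := by
  rw [Multiset.le_iff_count]; intro a
  simp only [Multiset.count_add, Multiset.count_replicate, Multiset.count_nsmul]
  by_cases hax : x = a
  · subst hax
    have h1 : Multiset.count x s.val = 1 := Multiset.count_eq_one_of_mem s.nodup hx
    rw [if_pos rfl, if_neg hxy.symm, h1]; omega
  · by_cases hay : y = a
    · subst hay
      have h1 : Multiset.count y s.val = 1 := Multiset.count_eq_one_of_mem s.nodup hy
      rw [if_neg hax, if_pos rfl, h1]; omega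
    · rw [if_neg hax, if_neg hay]; simp

lemma single_le (s : Finset ℤ) {x : ℤ} (hx : x ∈ s) (r c : ℕ) (hc : c ≤ r) :
    Multiset.replicate c x ≤ r • s.val := by
  rw [Multiset.le_iff_count]; intro a
  simp only [Multiset.count_replicate, Multiset.count_nsmul]
  by_cases hax : x = a
  · subst hax
    have h1 : Multiset.count x s.val = 1 := Multiset.count_eq_one_of_mem s.nodup hx
    rw [if_pos rfl, h1]; omega
  · rw [if_neg hax]; simp

lemma sum_replicate_int (c : ℕ) (x : ℤ) : (Multiset.replicate c x).sum = (c : ℤ) * x := by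
  simp [Multiset.sum_replicate]

lemma pass1 (r w : ℕ) (hw1 : 1 ≤ w) (hwr : w ≤ r) :
    ∀ (n : ℕ) (P : Finset ℤ) (b : ℤ), P.card = n → (∀ x ∈ P, 0 < x) → b ∈ P →
    (∀ x ∈ P, x ≤ b) →
    ∃ U : Finset ℤ, U.card = w * n ∧ (∀ x ∈ U, 0 < x ∧ x ≤ (w : ℤ) * b) ∧
      ((w : ℤ) * b ∈ U) ∧
      ∀ x ∈ U, ∃ B : Multiset ℤ, B ≤ r • P.val ∧ Multiset.card B ≤ w ∧ B.sum = x := by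
  intro n
  induction n with
  | zero =>
    intro P b hcard _ hbP _
    exact absurd hbP (by simp [Finset.card_eq_zero.mp hcard])
  | succ n ih =>
    intro P b hcard hpos hbP hble
    have hb0 : 0 < b := hpos b hbP
    rcases Nat.eq_zero_or_pos n with hn0 | hnpos
    · -- singleton case
      subst hn0
      obtain ⟨a, ha⟩ := Finset.card_eq_one.mp hcard
      have hba : b = a := by
        have := hbP; rw [ha] at this; simpa using this
      subst hba
      refine ⟨(Finset.Icc 1 w).image (fun c : ℕ => (c : ℤ) * b), ?_, ?_, ?_, ?_⟩
      · rw [Finset.card_image_of_injOn, Nat.card_Icc]; · omega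
        intro c1 _ c2 _ h
        have : (c1 : ℤ) = c2 := by
          have hb : (b : ℤ) ≠ 0 := ne_of_gt hb0
          exact mul_right_cancel₀ hb h
        exact_mod_cast this
      · intro x hx
        simp only [Finset.mem_image, Finset.mem_Icc] at hx
        obtain ⟨c, ⟨hc1, hc2⟩, rfl⟩ := hx
        constructor
        · have : (1 : ℤ) ≤ (c : ℤ) := by exact_mod_cast hc1
          nlinarith
        · have : (c : ℤ) ≤ (w : ℤ) := by exact_mod_cast hc2
          nlinarith
      · exact Finset.mem_image.mpr ⟨w, Finset.mem_Icc.mpr ⟨hw1, le_refl w⟩, rfl⟩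
      · intro x hx
        simp only [Finset.mem_image, Finset.mem_Icc] at hx
        obtain ⟨c, ⟨hc1, hc2⟩, rfl⟩ := hx
        exact ⟨Multiset.replicate c b, single_le P hbP r c (le_trans hc2 hwr),
          by simpa using hc2, sum_replicate_int c b⟩
    · -- step case
      have herase_card : (P.erase b).card = n := by
        rw [Finset.card_erase_of_mem hbP, hcard]; omega
      have herase_ne : (P.erase b).Nonempty := by
        rw [← Finset.card_pos, herase_card]; exact hnpos
      set b' := (P.erase b).max' herase_ne with hb'def
      have hb'mem : b' ∈ P.erase b := Finset.max'_mem _ _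
      have hb'P : b' ∈ P := Finset.mem_of_mem_erase hb'mem
      have hb'ne : b' ≠ b := Finset.ne_of_mem_erase hb'mem
      have hb'lt : b' < b := lt_of_le_of_ne (hble b' hb'P) hb'ne
      have hb'0 : 0 < b' := hpos b' hb'P
      obtain ⟨U', hU'card, hU'bd, hU'max, hU'val⟩ :=
        ih (P.erase b) b' herase_card (fun x hx => hpos x (Finset.mem_of_mem_erase hx))
          hb'mem (fun x hx => Finset.le_max' _ x hx)
      set g : ℕ → ℤ := fun c => (w : ℤ) * b' + (c : ℤ) * (b - b') with hg
      have hgmono : ∀ c1 c2 : ℕ, c1 < c2 → g c1 < g c2 := by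
        intro c1 c2 h
        simp only [hg]
        have : (c1 : ℤ) < c2 := by exact_mod_cast h
        nlinarith
      refine ⟨U' ∪ (Finset.Icc 1 w).image g, ?_, ?_, ?_, ?_⟩
      · rw [Finset.card_union_of_disjoint, hU'card, Finset.card_image_of_injOn,
          Nat.card_Icc]
        · ring_nf; omega
        · intro c1 hc1 c2 hc2 h
          by_contra hne
          rcases lt_or_gt_of_ne hne with hlt | hlt
          · exact absurd h (ne_of_lt (hgmono _ _ hlt))
          · exact absurd h.symm (ne_of_lt (hgmono _ _ hlt))
        · rw [Finset.disjoint_left]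
          intro x hxU' hximg
          simp only [Finset.mem_image, Finset.mem_Icc] at hximg
          obtain ⟨c, ⟨hc1, _⟩, rfl⟩ := hximg
          have h1 : g c ≤ (w : ℤ) * b' := (hU'bd _ hxU').2
          have h2 : (w : ℤ) * b' < g c := by
            simp only [hg]
            have : (1 : ℤ) ≤ (c : ℤ) := by exact_mod_cast hc1
            nlinarith
          exact absurd h1 (not_le.mpr h2)
      · intro x hx
        rcases Finset.mem_union.mp hx with hx | hx
        · obtain ⟨h1, h2⟩ := hU'bd x hx
          refine ⟨h1, le_trans h2 ?_⟩
          have : (0 : ℤ) ≤ (w : ℤ) := by positivity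
          nlinarith
        · simp only [Finset.mem_image, Finset.mem_Icc] at hx
          obtain ⟨c, ⟨hc1, hc2⟩, rfl⟩ := hx
          constructor
          · simp only [hg]
            have : (1 : ℤ) ≤ (c : ℤ) := by exact_mod_cast hc1
            have : (0:ℤ) < w := by exact_mod_cast hw1
            nlinarith
          · simp only [hg]
            have : (c : ℤ) ≤ (w : ℤ) := by exact_mod_cast hc2
            nlinarith
      · refine Finset.mem_union_right _ (Finset.mem_image.mpr ⟨w,
          Finset.mem_Icc.mpr ⟨hw1, le_refl w⟩, ?_⟩)
        simp only [hg]; ring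
      · intro x hx
        rcases Finset.mem_union.mp hx with hx | hx
        · obtain ⟨B, hB1, hB2, hB3⟩ := hU'val x hx
          refine ⟨B, le_trans hB1 ?_, hB2, hB3⟩
          apply nsmul_mono_ms
          rw [Finset.erase_val]
          exact Multiset.erase_le b P.val
        · simp only [Finset.mem_image, Finset.mem_Icc] at hx
          obtain ⟨c, ⟨hc1, hc2⟩, rfl⟩ := hx
          refine ⟨Multiset.replicate (w - c) b' + Multiset.replicate c b,
            pair_le P hb'P hbP hb'ne r (w-c) c (by omega) (le_trans hc2 hwr), ?_, ?_⟩
          · simp [Multiset.card_replicate]; omega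
          · rw [Multiset.sum_add, sum_replicate_int, sum_replicate_int]
            have : ((w - c : ℕ) : ℤ) = (w : ℤ) - c := by
              have : c ≤ w := hc2; push_cast [Nat.cast_sub this]; ring
            rw [this]; simp only [hg]; ring

lemma smul_val_erase (r : ℕ) (P : Finset ℤ) (b : ℤ) (hb : b ∈ P) :
    r • P.val = Multiset.replicate r b + r • (P.erase b).val := by
  have h1 : P.val = b ::ₘ (P.erase b).val := by
    rw [Finset.erase_val]
    exact (Multiset.cons_erase (by exact_mod_cast hb)).symm
  rw [h1]
  have : (b ::ₘ (P.erase b).val) = ({b} : Multiset ℤ) + (P.erase b).val := by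
    simp [Multiset.singleton_add]
  rw [this, smul_add]
  congr 1
  simp [Multiset.nsmul_singleton]

lemma poschain (r : ℕ) (hr : 1 ≤ r) :
    ∀ (p : ℕ) (P : Finset ℤ), P.card = p → (∀ x ∈ P, 0 < x) → ∀ (γ : ℕ),
    ∃ V : Finset ℤ, 1 + fchain r p γ ≤ V.card ∧ (0 : ℤ) ∈ V ∧ (∀ x ∈ V, 0 ≤ x) ∧
      ∀ x ∈ V, ∃ B : Multiset ℤ, B ≤ r • P.val ∧ Multiset.card B ≤ γ ∧ B.sum = x := by
  intro p
  induction p with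
  | zero =>
    intro P hcard hpos γ
    refine ⟨{0}, by simp [fchain], by simp, by simp, ?_⟩
    intro x hx
    simp only [Finset.mem_singleton] at hx
    subst hx
    exact ⟨0, Multiset.zero_le _, by simp, by simp⟩
  | succ p ih =>
    intro P hcard hpos γ
    rcases Nat.eq_zero_or_pos γ with hγ0 | hγpos
    · subst hγ0
      refine ⟨{0}, by simp [fchain_zero], by simp, by simp, ?_⟩
      intro x hx
      simp only [Finset.mem_singleton] at hx
      subst hx
      exact ⟨0, Multiset.zero_le _, by simp, by simp⟩
    · set w := min γ r with hwdef
      have hw1 : 1 ≤ w := by omega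
      have hwr : w ≤ r := min_le_right _ _
      have hwγ : w ≤ γ := min_le_left _ _
      have hPne : P.Nonempty := by rw [← Finset.card_pos, hcard]; omega
      set b := P.max' hPne with hbdef
      have hbP : b ∈ P := Finset.max'_mem _ _
      have hb0 : 0 < b := hpos b hbP
      obtain ⟨U, hUcard, hUbd, hUmax, hUval⟩ :=
        pass1 r w hw1 hwr (p+1) P b hcard hpos hbP (fun x hx => Finset.le_max' _ x hx)
      have herase_card : (P.erase b).card = p := by
        rw [Finset.card_erase_of_mem hbP, hcard]; omega
      obtain ⟨V', hV'card, hV'0, hV'nonneg, hV'val⟩ :=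
        ih (P.erase b) herase_card (fun x hx => hpos x (Finset.mem_of_mem_erase hx)) (γ - w)
      set img := (V'.erase 0).image (fun y => (w : ℤ) * b + y) with himgdef
      have hwb0 : (0 : ℤ) < (w : ℤ) * b := by
        have : (0:ℤ) < (w:ℤ) := by exact_mod_cast hw1
        nlinarith
      have himg_gt : ∀ x ∈ img, (w : ℤ) * b < x := by
        intro x hx
        simp only [himgdef, Finset.mem_image] at hx
        obtain ⟨y, hy, rfl⟩ := hx
        have hy0 : y ≠ 0 := Finset.ne_of_mem_erase hy
        have hyV : y ∈ V' := Finset.mem_of_mem_erase hy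
        have : 0 ≤ y := hV'nonneg y hyV
        have : 0 < y := lt_of_le_of_ne this (Ne.symm hy0)
        linarith
      have hdisj : Disjoint U img := by
        rw [Finset.disjoint_left]
        intro x hxU hximg
        have h1 : x ≤ (w : ℤ) * b := (hUbd x hxU).2
        have h2 : (w : ℤ) * b < x := himg_gt x hximg
        linarith
      have h0notin : (0 : ℤ) ∉ U ∪ img := by
        rw [Finset.mem_union]
        rintro (h | h)
        · exact absurd (hUbd 0 h).1 (lt_irrefl 0)
        · have := himg_gt 0 h; linarith
      refine ⟨insert 0 (U ∪ img), ?_, Finset.mem_insert_self _ _, ?_, ?_⟩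
      · rw [Finset.card_insert_of_notMem h0notin, Finset.card_union_of_disjoint hdisj,
          hUcard]
        have himgcard : fchain r p (γ - w) ≤ img.card := by
          rw [himgdef, Finset.card_image_of_injOn (fun a _ c _ h => by linarith),
            Finset.card_erase_of_mem hV'0]
          omega
        have : fchain r (p+1) γ = w * (p+1) + fchain r p (γ - w) := by
          simp [fchain, hwdef]
        omega
      · intro x hx
        rcases Finset.mem_insert.mp hx with rfl | hx
        · exact le_refl 0
        rcases Finset.mem_union.mp hx with hx | hx
        · exact le_of_lt (hUbd x hx).1
        · have := himg_gt x hx; linarith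
      · intro x hx
        rcases Finset.mem_insert.mp hx with rfl | hx
        · exact ⟨0, Multiset.zero_le _, by simp, by simp⟩
        rcases Finset.mem_union.mp hx with hx | hx
        · obtain ⟨B, hB1, hB2, hB3⟩ := hUval x hx
          exact ⟨B, hB1, le_trans hB2 hwγ, hB3⟩
        · simp only [himgdef, Finset.mem_image] at hx
          obtain ⟨y, hy, rfl⟩ := hx
          obtain ⟨B', hB'1, hB'2, hB'3⟩ := hV'val y (Finset.mem_of_mem_erase hy)
          refine ⟨Multiset.replicate w b + B', ?_, ?_, ?_⟩
          · rw [smul_val_erase r P b hbP]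
            exact add_le_add ((Multiset.replicate_le_replicate b).mpr hwr) hB'1
          · simp only [Multiset.card_add, Multiset.card_replicate]
            omega
          · rw [Multiset.sum_add, sum_replicate_int]
            rw [hB'3]

lemma map_nsmul_ms (f : ℤ → ℤ) (r : ℕ) (s : Multiset ℤ) :
    (r • s).map f = r • (s.map f) := by
  induction r with
  | zero => simp
  | succ n ih => rw [succ_nsmul, succ_nsmul, Multiset.map_add, ih]

lemma negchain (r : ℕ) (hr : 1 ≤ r) (n : ℕ) (N : Finset ℤ) (hcard : N.card = n)
    (hneg : ∀ x ∈ N, x < 0) (γ : ℕ) :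
    ∃ W : Finset ℤ, 1 + fchain r n γ ≤ W.card ∧ (0 : ℤ) ∈ W ∧ (∀ x ∈ W, x ≤ 0) ∧
      ∀ x ∈ W, ∃ B : Multiset ℤ, B ≤ r • N.val ∧ Multiset.card B ≤ γ ∧ B.sum = x := by
  set P := N.image (fun x => -x) with hPdef
  have hPcard : P.card = n := by
    rw [hPdef, Finset.card_image_of_injective _ neg_injective, hcard]
  have hPpos : ∀ x ∈ P, 0 < x := by
    intro x hx
    simp only [hPdef, Finset.mem_image] at hx
    obtain ⟨y, hy, rfl⟩ := hx
    exact neg_pos.mpr (hneg y hy)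
  have hPval : P.val = N.val.map (fun x => -x) := by
    rw [hPdef, Finset.image_val, Multiset.dedup_eq_self.mpr]
    exact N.nodup.map neg_injective
  obtain ⟨V, hVcard, hV0, hVnonneg, hVval⟩ := poschain r hr n P hPcard hPpos γ
  refine ⟨V.image (fun v => -v), ?_, ?_, ?_, ?_⟩
  · rw [Finset.card_image_of_injective _ neg_injective]; exact hVcard
  · exact Finset.mem_image.mpr ⟨0, hV0, by simp⟩
  · intro x hx
    simp only [Finset.mem_image] at hx
    obtain ⟨v, hv, rfl⟩ := hx
    simpa using hVnonneg v hv
  · intro x hx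
    simp only [Finset.mem_image] at hx
    obtain ⟨v, hv, rfl⟩ := hx
    obtain ⟨B, hB1, hB2, hB3⟩ := hVval v hv
    refine ⟨B.map (fun z => -z), ?_, by simpa using hB2, by simp [Multiset.sum_map_neg', hB3]⟩
    have h1 : (B.map (fun z => -z)) ≤ (r • P.val).map (fun z => -z) :=
      Multiset.map_le_map hB1
    rwa [map_nsmul_ms, hPval, Multiset.map_map, (by ext z; simp : ((fun x : ℤ => -x) ∘ fun x => -x) = id), Multiset.map_id] at h1

lemma mem_sigmaSeqAtLeast {A : Finset ℤ} {r α : ℕ} {x : ℤ} :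
    x ∈ sigmaSeqAtLeast A r α ↔
      ∃ B : Multiset ℤ, B ≤ r • A.val ∧ α ≤ Multiset.card B ∧ B.sum = x := by
  simp only [sigmaSeqAtLeast, Multiset.mem_toFinset, Multiset.mem_map,
    Multiset.mem_filter, Multiset.mem_powerset]
  constructor
  · rintro ⟨B, ⟨h1, h2⟩, h3⟩; exact ⟨B, h1, h2, h3⟩
  · rintro ⟨B, h1, h2, h3⟩; exact ⟨B, ⟨h1, h2⟩, h3⟩

theorem stmt_18 (k r α m : ℕ) (hk : 3 ≤ k) (hr : 1 ≤ r)
    (hα : α ≤ r * k - 1) (hm1 : 1 ≤ m) (hmk : m ≤ k)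
    (hml : (m - 1) * r ≤ α) (hmu : α < m * r)
    (A : Finset ℤ) (hcard : A.card = k) (h0 : (0 : ℤ) ∉ A) :
    ((sigmaSeqAtLeast A r α).card : ℤ) ≥
      (r : ℤ) * (((k : ℤ) + 1) ^ 2 / 4 - (m : ℤ) * ((m : ℤ) + 1) / 2) + 1 := by
  have hrk1 : 1 ≤ r * k := by
    calc 1 ≤ 1 * 3 := by omega
    _ ≤ r * k := Nat.mul_le_mul hr hk
  set γ := r * k - α with hγdef
  set Pf := A.filter (fun x => 0 < x) with hPfdef
  set Nf := A.filter (fun x => x < 0) with hNfdef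
  set p := Pf.card with hpdef
  set n := Nf.card with hndef
  have hpn : p + n = k := by
    have hdisj : Disjoint Pf Nf := by
      rw [Finset.disjoint_left]
      intro x hx1 hx2
      simp only [hPfdef, Finset.mem_filter] at hx1
      simp only [hNfdef, Finset.mem_filter] at hx2
      linarith [hx1.2, hx2.2]
    have hunion : Pf ∪ Nf = A := by
      ext x
      simp only [hPfdef, hNfdef, Finset.mem_union, Finset.mem_filter]
      constructor
      · rintro (⟨h, _⟩ | ⟨h, _⟩) <;> exact h
      · intro hx
        have hx0 : x ≠ 0 := fun h => h0 (h ▸ hx)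
        rcases lt_or_gt_of_ne hx0 with h | h
        · exact Or.inr ⟨hx, h⟩
        · exact Or.inl ⟨hx, h⟩
    rw [hpdef, hndef, ← Finset.card_union_of_disjoint hdisj, hunion, hcard]
  obtain ⟨V, hVcard, hV0, hVnonneg, hVval⟩ :=
    poschain r hr p Pf rfl (fun x hx => (Finset.mem_filter.mp hx).2) γ
  obtain ⟨W, hWcard, hW0, hWnonpos, hWval⟩ :=
    negchain r hr n Nf rfl (fun x hx => (Finset.mem_filter.mp hx).2) γ
  set S := V ∪ W with hSdef
  have hScard : 1 + fchain r p γ + fchain r n γ ≤ S.card := by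
    have hinter : V ∩ W ⊆ {0} := by
      intro x hx
      rw [Finset.mem_inter] at hx
      have h1 := hVnonneg x hx.1
      have h2 := hWnonpos x hx.2
      simp only [Finset.mem_singleton]
      omega
    have huni : S.card + (V ∩ W).card = V.card + W.card := by
      rw [hSdef]; exact Finset.card_union_add_card_inter V W
    have hle : (V ∩ W).card ≤ 1 := by
      calc (V ∩ W).card ≤ ({0} : Finset ℤ).card := Finset.card_le_card hinter
      _ = 1 := by simp
    omega
  have hSval : ∀ x ∈ S, ∃ C : Multiset ℤ, C ≤ r • A.val ∧ Multiset.card C ≤ γ ∧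
      C.sum = x := by
    intro x hx
    rcases Finset.mem_union.mp hx with hx | hx
    · obtain ⟨C, hC1, hC2, hC3⟩ := hVval x hx
      refine ⟨C, le_trans hC1 (nsmul_mono_ms ?_ r), hC2, hC3⟩
      rw [hPfdef, Finset.filter_val]
      exact Multiset.filter_le _ _
    · obtain ⟨C, hC1, hC2, hC3⟩ := hWval x hx
      refine ⟨C, le_trans hC1 (nsmul_mono_ms ?_ r), hC2, hC3⟩
      rw [hNfdef, Finset.filter_val]
      exact Multiset.filter_le _ _
  set σ := (r • A.val).sum with hσdef
  have hT : S.image (fun x => σ - x) ⊆ sigmaSeqAtLeast A r α := by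
    intro y hy
    simp only [Finset.mem_image] at hy
    obtain ⟨x, hx, rfl⟩ := hy
    obtain ⟨C, hC1, hC2, hC3⟩ := hSval x hx
    rw [mem_sigmaSeqAtLeast]
    refine ⟨r • A.val - C, tsub_le_self, ?_, ?_⟩
    · have hadd : C + (r • A.val - C) = r • A.val := by
        rw [add_tsub_cancel_of_le hC1]
      have hcards : Multiset.card C + Multiset.card (r • A.val - C) = r * k := by
        rw [← Multiset.card_add, hadd, Multiset.card_nsmul, ← hcard]; rfl
      omega
    · have hadd : C + (r • A.val - C) = r • A.val := by
        rw [add_tsub_cancel_of_le hC1]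
      have : C.sum + (r • A.val - C).sum = σ := by
        rw [← Multiset.sum_add, hadd]
      omega
  have hfinal_nat : 1 + fchain r p γ + fchain r n γ ≤ (sigmaSeqAtLeast A r α).card := by
    calc 1 + fchain r p γ + fchain r n γ ≤ S.card := hScard
    _ = (S.image (fun x => σ - x)).card := by
        rw [Finset.card_image_of_injOn (fun a _ b _ h => by omega)]
    _ ≤ (sigmaSeqAtLeast A r α).card := Finset.card_le_card hT
  -- arithmetic part
  set d := k - m with hddef
  have hγd : r * d ≤ γ := by
    have h1 : α < r * m := by rwa [Nat.mul_comm] at hmu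
    have h2 : r * d + r * m = r * k := by
      rw [← Nat.mul_add]
      congr 1
      omega
    omega
  set D := ((k : ℤ) + 1) ^ 2 / 4 with hDdef
  set M := (m : ℤ) * ((m : ℤ) + 1) / 2 with hMdef
  have hMtri : M = (tri m : ℤ) := tri_eq_div m
  have hfin : (r : ℤ) * (D - M) ≤ (fchain r p γ : ℤ) + (fchain r n γ : ℤ) := by
    by_cases hpd : p ≤ d ∧ n ≤ d
    · have h1 : r * tri p ≤ fchain r p γ :=
        fchain_ge r p p γ (le_refl p) (le_trans (Nat.mul_le_mul_left r hpd.1) hγd)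
      have h2 : r * tri n ≤ fchain r n γ :=
        fchain_ge r n n γ (le_refl n) (le_trans (Nat.mul_le_mul_left r hpd.2) hγd)
      have h3 := key_div p n k hpn
      have hM0 : (0 : ℤ) ≤ M := by rw [hMtri]; positivity
      have h4 : D - M ≤ (tri p : ℤ) + (tri n : ℤ) := by linarith
      calc (r : ℤ) * (D - M) ≤ (r : ℤ) * ((tri p : ℤ) + (tri n : ℤ)) :=
            mul_le_mul_of_nonneg_left h4 (by positivity)
      _ ≤ (fchain r p γ : ℤ) + (fchain r n γ : ℤ) := by
          push_cast
          have h1' : ((r * tri p : ℕ) : ℤ) ≤ (fchain r p γ : ℤ) := by exact_mod_cast h1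
          have h2' : ((r * tri n : ℕ) : ℤ) ≤ (fchain r n γ : ℤ) := by exact_mod_cast h2
          push_cast at h1' h2'
          linarith
    · have hdm : d + m = k := by omega
      have h3 := key_div d m k hdm
      have h4 : D - M ≤ (tri d : ℤ) := by rw [hMtri]; linarith
      have hdle : d ≤ p ∨ d ≤ n := by omega
      have hkey : (r : ℤ) * (tri d : ℤ) ≤ (fchain r p γ : ℤ) + (fchain r n γ : ℤ) := by
        rcases hdle with h | h
        · have h1 : r * tri d ≤ fchain r p γ := fchain_ge r p d γ h hγd
          have h1' : ((r * tri d : ℕ) : ℤ) ≤ (fchain r p γ : ℤ) := by exact_mod_cast h1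
          push_cast at h1'
          have : (0 : ℤ) ≤ (fchain r n γ : ℤ) := by positivity
          linarith
        · have h1 : r * tri d ≤ fchain r n γ := fchain_ge r n d γ h hγd
          have h1' : ((r * tri d : ℕ) : ℤ) ≤ (fchain r n γ : ℤ) := by exact_mod_cast h1
          push_cast at h1'
          have : (0 : ℤ) ≤ (fchain r p γ : ℤ) := by positivity
          linarith
      calc (r : ℤ) * (D - M) ≤ (r : ℤ) * (tri d : ℤ) :=
            mul_le_mul_of_nonneg_left h4 (by positivity)
      _ ≤ _ := hkey
  have hcast : (1 + fchain r p γ + fchain r n γ : ℤ) ≤ ((sigmaSeqAtLeast A r α).card : ℤ) := by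
    exact_mod_cast hfinal_nat
  push_cast at hcast
  linarith
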